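/- arXiv:2208.01885 — 2 statements merged into one kernel-verified Lean document; each statement's English description precedes it below -/
import Mathlib

section
/- Let q be an odd prime power with q ≡ 3 (mod 4), and let a_1, …, a_n ∈ F_q be pairwise distinct. Then at most one index j ∈ {1,…,n} satisfies χ(a_j - a_i) ≠ -1 for all i ≠ j; consequently, the sum over i = 1,…,n of the product over j = 1,…,n of (χ(a_i - a_j) + 1) is at most 2^{n-1}. -/
theorem at_most_one_dominant_and_sum_bound
    (F : Type*) [Field F] [Fintype F] [DecidableEq F]
    (h3 : Fintype.card F % 4 = 3)
    (n : ℕ) (a : Fin n → F) (ha : Function.Injective a) :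
    (∀ j₁ j₂ : Fin n,
        (∀ i : Fin n, i ≠ j₁ → quadraticChar F (a j₁ - a i) ≠ -1) →
        (∀ i : Fin n, i ≠ j₂ → quadraticChar F (a j₂ - a i) ≠ -1) →
        j₁ = j₂) ∧
    (∑ i : Fin n, ∏ j : Fin n, (quadraticChar F (a i - a j) + 1)) ≤ 2 ^ (n - 1) := by
  have hchar : ringChar F ≠ 2 := by
    intro h
    have h2 := FiniteField.even_card_of_char_two h
    omega
  have hneg1 : quadraticChar F (-1) = -1 := by
    rw [quadraticChar_neg_one hchar, ZMod.χ₄_nat_three_mod_four h3]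
  have key : ∀ x : F, x ≠ 0 → quadraticChar F x = -1 ∨ quadraticChar F (-x) = -1 := by
    intro x hx
    rcases quadraticChar_dichotomy hx with h | h
    · right
      rw [show (-x : F) = -1 * x by ring, map_mul, hneg1, h]; ring
    · left; exact h
  have part1 : ∀ j₁ j₂ : Fin n,
      (∀ i : Fin n, i ≠ j₁ → quadraticChar F (a j₁ - a i) ≠ -1) →
      (∀ i : Fin n, i ≠ j₂ → quadraticChar F (a j₂ - a i) ≠ -1) →
      j₁ = j₂ := by
    intro j₁ j₂ h1 h2
    by_contra hne
    have hx : a j₁ - a j₂ ≠ 0 := sub_ne_zero.mpr (fun h => hne (ha h))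
    rcases key _ hx with h | h
    · exact h1 j₂ (Ne.symm hne) h
    · exact h2 j₁ hne (by rwa [neg_sub] at h)
  refine ⟨part1, ?_⟩
  -- bounds on factors
  have hvals : ∀ x : F, quadraticChar F x = 0 ∨ quadraticChar F x = 1 ∨
      quadraticChar F x = -1 := by
    intro x
    by_cases hx : x = 0
    · left; rw [hx]; exact quadraticChar_zero
    · right; exact quadraticChar_dichotomy hx
  have hfac_nonneg : ∀ i j : Fin n, (0 : ℤ) ≤ quadraticChar F (a i - a j) + 1 := by
    intro i j
    rcases hvals (a i - a j) with h | h | h <;> rw [h] <;> norm_num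
  have hfac_le : ∀ i j : Fin n, quadraticChar F (a i - a j) + 1 ≤ 2 := by
    intro i j
    rcases hvals (a i - a j) with h | h | h <;> rw [h] <;> norm_num
  have hP_nonneg : ∀ i : Fin n, (0 : ℤ) ≤ ∏ j : Fin n, (quadraticChar F (a i - a j) + 1) :=
    fun i => Finset.prod_nonneg fun j _ => hfac_nonneg i j
  have hP_le : ∀ i : Fin n, (∏ j : Fin n, (quadraticChar F (a i - a j) + 1)) ≤ 2 ^ (n - 1) := by
    intro i
    have hmem : i ∈ Finset.univ := Finset.mem_univ i
    rw [← Finset.prod_erase_mul _ _ hmem]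
    have hii : quadraticChar F (a i - a i) + 1 = 1 := by
      simp [sub_self]
    rw [hii, mul_one]
    calc ∏ j ∈ Finset.univ.erase i, (quadraticChar F (a i - a j) + 1)
        ≤ ∏ j ∈ Finset.univ.erase i, (2 : ℤ) :=
          Finset.prod_le_prod (fun j _ => hfac_nonneg i j) (fun j _ => hfac_le i j)
      _ = 2 ^ (n - 1) := by
          rw [Finset.prod_const, Finset.card_erase_of_mem hmem, Finset.card_univ,
            Fintype.card_fin]
  by_cases hex : ∃ i₀ : Fin n, (∏ j : Fin n, (quadraticChar F (a i₀ - a j) + 1)) ≠ 0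
  · obtain ⟨i₀, hi₀⟩ := hex
    have hdom : ∀ i : Fin n,
        (∏ j : Fin n, (quadraticChar F (a i - a j) + 1)) ≠ 0 →
        (∀ k : Fin n, k ≠ i → quadraticChar F (a i - a k) ≠ -1) := by
      intro i hi k _ hk
      apply hi
      exact Finset.prod_eq_zero (Finset.mem_univ k) (by rw [hk]; ring)
    have hsum : (∑ i : Fin n, ∏ j : Fin n, (quadraticChar F (a i - a j) + 1))
        = ∏ j : Fin n, (quadraticChar F (a i₀ - a j) + 1) := by
      apply Finset.sum_eq_single
      · intro i _ hne
        by_contra hiz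
        exact hne (part1 i i₀ (hdom i hiz) (hdom i₀ hi₀))
      · intro h; exact absurd (Finset.mem_univ i₀) h
    rw [hsum]
    exact hP_le i₀
  · push_neg at hex
    have : (∑ i : Fin n, ∏ j : Fin n, (quadraticChar F (a i - a j) + 1)) = 0 :=
      Finset.sum_eq_zero fun i _ => hex i
    rw [this]
    positivity
end

section
/- Let q be an odd prime power and Q_q the set of squares in F_q. There exist a positive integer n ≤ ⌈log q / log 2⌉ and pairwise distinct a_1, …, a_n ∈ F_q such that the union of the sets Q_q + a_i for i = 1,…,n equals F_q. -/
open Finset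

/-- The number of squares in a field is at least `(card + 1)/2`. -/
lemma sq_image_card (F : Type*) [Field F] [Fintype F] [DecidableEq F] :
    Fintype.card F + 1 ≤ 2 * ((Finset.univ : Finset F).image (fun u => u ^ 2)).card := by
  classical
  set I : Finset F := (Finset.univ : Finset F).image (fun u => u ^ 2) with hI
  have h0 : (0 : F) ∈ I := by
    simp only [hI, mem_image]
    exact ⟨0, mem_univ _, by ring⟩
  have hcard : Fintype.card F = ∑ y ∈ I, ((Finset.univ : Finset F).filter
      (fun u => u ^ 2 = y)).card := by
    rw [← Finset.card_univ]
    exact Finset.card_eq_sum_card_fiberwise (fun u _ => mem_image_of_mem _ (mem_univ u))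
  have hfib : ∀ y ∈ I, ((Finset.univ : Finset F).filter (fun u => u ^ 2 = y)).card ≤ 2 := by
    intro y hy
    obtain ⟨u, _, hu⟩ := mem_image.mp hy
    refine le_trans (Finset.card_le_card (fun v hv => ?_)) (Finset.card_insert_le u {-u} |>.trans
      (by simp))
    simp only [mem_filter] at hv
    have hvu : (v - u) * (v + u) = 0 := by linear_combination hv.2 - hu
    rcases mul_eq_zero.mp hvu with h | h
    · simp [sub_eq_zero.mp h]
    · have : v = -u := by linear_combination h
      simp [this]
  have hfib0 : ((Finset.univ : Finset F).filter (fun u => u ^ 2 = (0:F))).card = 1 := by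
    rw [Finset.card_eq_one]
    refine ⟨0, ?_⟩
    ext v
    simp [pow_eq_zero_iff]
  calc Fintype.card F + 1
      = (∑ y ∈ I.erase 0, ((Finset.univ : Finset F).filter (fun u => u ^ 2 = y)).card)
        + ((Finset.univ : Finset F).filter (fun u => u ^ 2 = (0:F))).card + 1 := by
        rw [hcard, ← Finset.sum_erase_add I _ h0]
    _ ≤ (∑ _y ∈ I.erase 0, 2) + 1 + 1 := by
        rw [hfib0]
        gcongr with y hy
        exact hfib y (Finset.mem_of_mem_erase hy)
    _ = 2 * (I.erase 0).card + 2 := by rw [Finset.sum_const, smul_eq_mul, mul_comm]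
    _ = 2 * ((I.erase 0).card + 1) := by ring
    _ = 2 * I.card := by rw [Finset.card_erase_add_one h0]

/-- Averaging: some shift of the squares covers more than half of `S`. -/
lemma exists_good_shift (F : Type*) [Field F] [Fintype F] [DecidableEq F]
    (S : Finset F) (hS : 0 < S.card) :
    ∃ a : F, 2 * (S.filter (fun x => ¬ ∃ u : F, u ^ 2 + a = x)).card < S.card := by
  classical
  set q := Fintype.card F with hq
  set I : Finset F := (Finset.univ : Finset F).image (fun u => u ^ 2) with hI
  -- total count
  have hsum : ∑ a : F, (S.filter (fun x => ∃ u : F, u ^ 2 + a = x)).card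
      = S.card * I.card := by
    have h1 : ∀ a : F, (S.filter (fun x => ∃ u : F, u ^ 2 + a = x)).card
        = ∑ x ∈ S, (if ∃ u : F, u ^ 2 + a = x then 1 else 0) := by
      intro a; rw [Finset.card_filter]
    simp_rw [h1]
    rw [Finset.sum_comm]
    have h2 : ∀ x : F, ∑ a : F, (if ∃ u : F, u ^ 2 + a = x then 1 else 0)
        = I.card := by
      intro x
      rw [← Finset.card_filter]
      have : (Finset.univ : Finset F).filter (fun a => ∃ u : F, u ^ 2 + a = x)
          = (Finset.univ : Finset F).image (fun u : F => x - u ^ 2) := by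
        ext a
        simp only [mem_filter, mem_univ, true_and, mem_image]
        constructor
        · rintro ⟨u, hu⟩; exact ⟨u, by linear_combination -hu⟩
        · rintro ⟨u, hu⟩; exact ⟨u, by linear_combination -hu⟩
      rw [this]
      have : (Finset.univ : Finset F).image (fun u : F => x - u ^ 2)
          = I.image (fun y => x - y) := by
        rw [hI, Finset.image_image]; rfl
      rw [this, Finset.card_image_of_injective _ (fun y z h => by linear_combination -h)]
    simp_rw [h2]
    rw [Finset.sum_const, smul_eq_mul]
  by_contra hcon
  push_neg at hcon
  have key : ∀ a : F, 2 * (S.filter (fun x => ∃ u : F, u ^ 2 + a = x)).card ≤ S.card := by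
    intro a
    have hsplit := Finset.card_filter_add_card_filter_not
      (s := S) (p := fun x => ∃ u : F, u ^ 2 + a = x)
    have := hcon a
    simp only [not_exists, ne_eq, Finset.filter_congr_decidable] at hsplit this ⊢
    omega
  have h1 : ∑ a : F, 2 * (S.filter (fun x => ∃ u : F, u ^ 2 + a = x)).card
      ≤ ∑ _a : F, S.card := Finset.sum_le_sum (fun a _ => key a)
  rw [← Finset.mul_sum, hsum, Finset.sum_const, Finset.card_univ, smul_eq_mul] at h1
  have h2 := sq_image_card F
  rw [← hI] at h2
  nlinarith

/-- Greedy covering: any set of size `< 2^n` can be covered by `≤ n` shifts of squares. -/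
lemma greedy_cover (F : Type*) [Field F] [Fintype F] [DecidableEq F] :
    ∀ n : ℕ, ∀ S : Finset F, S.card < 2 ^ n →
      ∃ A : Finset F, A.card ≤ n ∧ ∀ x ∈ S, ∃ a ∈ A, ∃ u : F, u ^ 2 + a = x := by
  intro n
  induction n with
  | zero =>
    intro S hS
    simp only [pow_zero, Nat.lt_one_iff, Finset.card_eq_zero] at hS
    exact ⟨∅, le_refl _, by simp [hS]⟩
  | succ n ih =>
    intro S hS
    rcases Nat.eq_zero_or_pos S.card with h0 | hpos
    · exact ⟨∅, Nat.zero_le _, by simp [Finset.card_eq_zero.mp h0]⟩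
    · obtain ⟨a, ha⟩ := exists_good_shift F S hpos
      set S' := S.filter (fun x => ¬ ∃ u : F, u ^ 2 + a = x) with hS'
      have hS'card : S'.card < 2 ^ n := by
        have : 2 * S'.card < 2 ^ (n + 1) := lt_of_lt_of_le ha (le_of_lt hS)
        omega
      obtain ⟨A', hA'card, hA'cov⟩ := ih S' hS'card
      refine ⟨insert a A', ?_, ?_⟩
      · exact (Finset.card_insert_le a A').trans (by omega)
      · intro y hy
        by_cases hcase : ∃ u : F, u ^ 2 + a = y
        · exact ⟨a, Finset.mem_insert_self a A', hcase⟩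
        · obtain ⟨b, hb, hub⟩ := hA'cov y (Finset.mem_filter.mpr ⟨hy, hcase⟩)
          exact ⟨b, Finset.mem_insert_of_mem hb, hub⟩

theorem exists_covering_shifts (F : Type*) [Field F] [Fintype F] [DecidableEq F]
    (hodd : Odd (Fintype.card F)) :
    ∃ n : ℕ, 0 < n ∧
      (n : ℝ) ≤ ⌈Real.log (Fintype.card F) / Real.log 2⌉ ∧
      ∃ a : Fin n → F, Function.Injective a ∧
        (⋃ i : Fin n, {y : F | ∃ u : F, u ^ 2 + a i = y}) = Set.univ := by
  classical
  set q := Fintype.card F with hq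
  have hq2 : 2 ≤ q := Fintype.one_lt_card
  have hq3 : 3 ≤ q := by
    rcases hodd with ⟨k, hk⟩; omega
  set x : ℝ := Real.log q / Real.log 2 with hx
  have hxlogb : x = Real.logb 2 q := rfl
  have hx0 : 0 ≤ x := by
    rw [hxlogb]
    apply Real.logb_nonneg one_lt_two
    exact_mod_cast hq2.trans' (by norm_num)
  set N : ℕ := ⌈x⌉₊ with hN
  have hqN : q < 2 ^ N := by
    have h1 : (q : ℝ) ≤ 2 ^ (N : ℝ) := by
      have : (q : ℝ) = 2 ^ x := by
        rw [hxlogb, Real.rpow_logb two_pos (by norm_num)]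
        positivity
      rw [this]
      exact Real.rpow_le_rpow_of_exponent_le one_le_two (Nat.le_ceil x)
    have h2 : (q : ℝ) ≤ ((2 ^ N : ℕ) : ℝ) := by
      rw [Real.rpow_natCast] at h1
      exact h1.trans_eq (by push_cast; ring)
    have hle : q ≤ 2 ^ N := by exact_mod_cast h2
    rcases eq_or_lt_of_le hle with h | h
    · exfalso
      have hN1 : 1 ≤ N := by
        by_contra hc
        have : N = 0 := by omega
        rw [this] at h
        omega
      have : 2 ∣ q := h ▸ dvd_pow_self 2 (by omega)
      rcases hodd with ⟨k, hk⟩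
      omega
    · exact h
  obtain ⟨A, hAcard, hAcov⟩ := greedy_cover F N (Finset.univ : Finset F)
    (by rwa [Finset.card_univ])
  have hAne : A.Nonempty := by
    obtain ⟨a, ha, _⟩ := hAcov 0 (Finset.mem_univ 0)
    exact ⟨a, ha⟩
  refine ⟨A.card, Finset.card_pos.mpr hAne, ?_, ?_⟩
  · have h1 : ((A.card : ℕ) : ℝ) ≤ (N : ℝ) := by exact_mod_cast hAcard
    calc ((A.card : ℕ) : ℝ) ≤ (N : ℝ) := h1
      _ = ((⌈x⌉ : ℤ) : ℝ) := by
          rw [hN]; exact_mod_cast Int.natCast_ceil_eq_ceil hx0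
      _ = _ := by norm_cast
  · refine ⟨fun i => (A.equivFin.symm i : F), ?_, ?_⟩
    · intro i j hij
      apply A.equivFin.symm.injective
      exact Subtype.ext hij
    · ext y
      simp only [Set.mem_iUnion, Set.mem_setOf_eq, Set.mem_univ, iff_true]
      obtain ⟨a, ha, u, hu⟩ := hAcov y (Finset.mem_univ y)
      refine ⟨A.equivFin ⟨a, ha⟩, u, ?_⟩
      rw [Equiv.symm_apply_apply]
      exact hu
end
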